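/- Let N ≥ 2, let u : S^{N−1} → (0,∞) be continuous, nonconstant, and separable in S^{N−1}, and let M ∈ O(N) and h₁ > h₂ in [−1,1] be such that, with u_M(x) = u(M⁻¹x): {x ∈ S^{N−1} : u_M(x) = max u} = {x ∈ S^{N−1} : x_N ≥ h₁}, {x ∈ S^{N−1} : u_M(x) = min u} = {x ∈ S^{N−1} : x_N ≤ h₂}, u_M is constant on each latitude {x ∈ S^{N−1} : x_N = h}, and α ↦ u_M(0,…,0, cos α, sin α) is nonincreasing on [π/2, 3π/2]. Then for every open half-space H ⊂ ℝ^N with 0 ∈ ∂H: (i) if M⁻¹(0,…,0,1) ∈ H, then u(x) ≥ u(σ_H x) for all x ∈ H ∩ S^{N−1}; (ii) if M⁻¹(0,…,0,1) ∉ cl(H), then u(x) ≤ u(σ_H x) for all x ∈ H ∩ S^{N−1}. -/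

import Mathlib

open scoped RealInnerProductSpace

/-- The point `(0,…,0, cos α, sin α)` of `ℝ^N`. -/
noncomputable def circlePoint (N : ℕ) (α : ℝ) : EuclideanSpace ℝ (Fin N) :=
  (EuclideanSpace.equiv (Fin N) ℝ).symm fun i =>
    if (i : ℕ) = N - 2 then Real.cos α else if (i : ℕ) = N - 1 then Real.sin α else 0

/-- The reflection of `ℝ^N` across the hyperplane `{x : ⟪a,x⟫ = 0}` through the
origin, bounding the open half-space `H = {x : ⟪a,x⟫ > 0}`. -/
noncomputable def reflectHyp0 {E : Type*} [NormedAddCommGroup E] [InnerProductSpace ℝ E]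
    (a : E) (x : E) : E :=
  x - ((2 * ⟪a, x⟫) / ⟪a, a⟫) • a


lemma reflectHyp0_norm {E : Type*} [NormedAddCommGroup E] [InnerProductSpace ℝ E]
    {a : E} (ha : a ≠ 0) (x : E) : ‖reflectHyp0 a x‖ = ‖x‖ := by
  have haa : ⟪a, a⟫ = ‖a‖ ^ 2 := real_inner_self_eq_norm_sq a
  have hna : ‖a‖ ≠ 0 := norm_ne_zero_iff.2 ha
  have hpos : (0:ℝ) < ‖a‖ ^ 2 := by positivity
  have h2 : ‖reflectHyp0 a x‖ ^ 2 = ‖x‖ ^ 2 := by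
    rw [reflectHyp0, @norm_sub_sq_real, real_inner_smul_right, norm_smul, mul_pow,
      real_inner_comm x a, haa]
    rw [Real.norm_eq_abs, sq_abs]
    field_simp
    ring
  have h3 : (‖reflectHyp0 a x‖ - ‖x‖) * (‖reflectHyp0 a x‖ + ‖x‖) = 0 := by nlinarith
  rcases mul_eq_zero.1 h3 with h | h
  · linarith
  · have := norm_nonneg (reflectHyp0 a x); have := norm_nonneg x; linarith

lemma reflectHyp0_map {E : Type*} [NormedAddCommGroup E] [InnerProductSpace ℝ E]
    (M : E ≃ₗᵢ[ℝ] E) (a x : E) : M (reflectHyp0 a x) = reflectHyp0 (M a) (M x) := by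
  simp only [reflectHyp0, map_sub, LinearIsometryEquiv.map_smul,
    LinearIsometryEquiv.inner_map_map]

lemma circlePoint_eq (N : ℕ) (hN : 2 ≤ N) (α : ℝ) :
    circlePoint N α = EuclideanSpace.single (⟨N-2, by omega⟩ : Fin N) (Real.cos α)
      + EuclideanSpace.single (⟨N-1, Nat.sub_lt (by omega) Nat.one_pos⟩ : Fin N) (Real.sin α) := by
  have hne : (N - 2 : ℕ) ≠ N - 1 := by omega
  ext i
  simp only [circlePoint, EuclideanSpace.equiv, PiLp.add_apply, EuclideanSpace.single_apply,
    LinearEquiv.coe_symm_mk, Fin.ext_iff]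
  rcases eq_or_ne (i : ℕ) (N - 2) with h | h <;> rcases eq_or_ne (i : ℕ) (N - 1) with h' | h' <;>
    simp_all

lemma circlePoint_norm (N : ℕ) (hN : 2 ≤ N) (α : ℝ) : ‖circlePoint N α‖ = 1 := by
  have hne : (⟨N-2, by omega⟩ : Fin N) ≠ (⟨N-1, Nat.sub_lt (by omega) Nat.one_pos⟩ : Fin N) := by
    intro hcon; rw [Fin.mk.injEq] at hcon; omega
  rw [circlePoint_eq N hN α]
  have h2 : ‖EuclideanSpace.single (⟨N-2, by omega⟩ : Fin N) (Real.cos α)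
      + EuclideanSpace.single (⟨N-1, Nat.sub_lt (by omega) Nat.one_pos⟩ : Fin N) (Real.sin α)‖ ^ 2 = 1 := by
    rw [@norm_add_sq_real]
    rw [EuclideanSpace.inner_single_left, EuclideanSpace.single_apply]
    simp [hne, EuclideanSpace.norm_single, Real.sin_sq_add_cos_sq]
  set v := EuclideanSpace.single (⟨N-2, by omega⟩ : Fin N) (Real.cos α)
      + EuclideanSpace.single (⟨N-1, Nat.sub_lt (by omega) Nat.one_pos⟩ : Fin N) (Real.sin α) with hv
  have h3 : (‖v‖ - 1) * (‖v‖ + 1) = 0 := by nlinarith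
  rcases mul_eq_zero.1 h3 with h | h
  · linarith
  · have := norm_nonneg v; linarith

lemma circlePoint_apply_last (N : ℕ) (hN : 2 ≤ N) (α : ℝ) :
    circlePoint N α ⟨N - 1, Nat.sub_lt (by omega) Nat.one_pos⟩ = Real.sin α := by
  have h1 : (N - 1 : ℕ) ≠ N - 2 := by omega
  simp [circlePoint, EuclideanSpace.equiv, h1]

/-- Let `u` be continuous, positive, nonconstant and separable on the unit
sphere, and let `M ∈ O(N)`, `h₁ > h₂` realize its axial symmetry and monotonicity as in
Lemma 2.4.  Then for every open half-space `H = {x : ⟪a,x⟫ > 0}` with `0 ∈ ∂H`: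
(i) if `M⁻¹ e_N ∈ H` then `u ≥ u ∘ σ_H` on `H ∩ S^{N−1}`;
(ii) if `M⁻¹ e_N ∉ cl H` then `u ≤ u ∘ σ_H` on `H ∩ S^{N−1}`. -/
theorem stmt_8 (N : ℕ) (hN : 2 ≤ N)
    (u : EuclideanSpace ℝ (Fin N) → ℝ)
    (hcont : ContinuousOn u (Metric.sphere (0 : EuclideanSpace ℝ (Fin N)) 1))
    (hpos : ∀ x ∈ Metric.sphere (0 : EuclideanSpace ℝ (Fin N)) 1, 0 < u x)
    (hnc : ∃ x ∈ Metric.sphere (0 : EuclideanSpace ℝ (Fin N)) 1,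
           ∃ y ∈ Metric.sphere (0 : EuclideanSpace ℝ (Fin N)) 1, u x ≠ u y)
    (hsep : ∀ a : EuclideanSpace ℝ (Fin N), a ≠ 0 →
      (∀ x ∈ Metric.sphere (0 : EuclideanSpace ℝ (Fin N)) 1,
        0 < ⟪a, x⟫ → u (reflectHyp0 a x) ≤ u x) ∨
      (∀ x ∈ Metric.sphere (0 : EuclideanSpace ℝ (Fin N)) 1,
        0 < ⟪a, x⟫ → u x ≤ u (reflectHyp0 a x)))
    (M : EuclideanSpace ℝ (Fin N) ≃ₗᵢ[ℝ] EuclideanSpace ℝ (Fin N)) (h₁ h₂ : ℝ)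
    (hh₁ : h₁ ∈ Set.Icc (-1 : ℝ) 1) (hh₂ : h₂ ∈ Set.Icc (-1 : ℝ) 1) (h₁₂ : h₂ < h₁)
    (hmaxset : ∀ x ∈ Metric.sphere (0 : EuclideanSpace ℝ (Fin N)) 1,
        ((∀ y ∈ Metric.sphere (0 : EuclideanSpace ℝ (Fin N)) 1, u y ≤ u (M.symm x)) ↔
          h₁ ≤ x ⟨N - 1, by omega⟩))
    (hminset : ∀ x ∈ Metric.sphere (0 : EuclideanSpace ℝ (Fin N)) 1,
        ((∀ y ∈ Metric.sphere (0 : EuclideanSpace ℝ (Fin N)) 1, u (M.symm x) ≤ u y) ↔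
          x ⟨N - 1, by omega⟩ ≤ h₂))
    (hlat : ∀ h ∈ Set.Icc (-1 : ℝ) 1,
        ∀ x ∈ Metric.sphere (0 : EuclideanSpace ℝ (Fin N)) 1,
        ∀ y ∈ Metric.sphere (0 : EuclideanSpace ℝ (Fin N)) 1,
          x ⟨N - 1, by omega⟩ = h → y ⟨N - 1, by omega⟩ = h →
          u (M.symm x) = u (M.symm y))
    (hmono : AntitoneOn (fun α => u (M.symm (circlePoint N α)))
        (Set.Icc (Real.pi / 2) (3 * Real.pi / 2))) :
    ∀ a : EuclideanSpace ℝ (Fin N), a ≠ 0 →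
      (0 < ⟪a, M.symm (EuclideanSpace.single (⟨N - 1, by omega⟩ : Fin N) (1 : ℝ))⟫ →
        ∀ x ∈ Metric.sphere (0 : EuclideanSpace ℝ (Fin N)) 1,
          0 < ⟪a, x⟫ → u (reflectHyp0 a x) ≤ u x) ∧
      (⟪a, M.symm (EuclideanSpace.single (⟨N - 1, by omega⟩ : Fin N) (1 : ℝ))⟫ < 0 →
        ∀ x ∈ Metric.sphere (0 : EuclideanSpace ℝ (Fin N)) 1,
          0 < ⟪a, x⟫ → u x ≤ u (reflectHyp0 a x)) := by
  intro a ha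
  set s : EuclideanSpace ℝ (Fin N) := EuclideanSpace.single (⟨N - 1, by omega⟩ : Fin N) (1 : ℝ)
    with hs
  have hcoord : ∀ y : EuclideanSpace ℝ (Fin N), ‖y‖ = 1 →
      y ⟨N - 1, by omega⟩ ∈ Set.Icc (-1:ℝ) 1 := by
    intro y hy
    have h1 : |⟪s, y⟫| ≤ ‖s‖ * ‖y‖ := abs_real_inner_le_norm s y
    rw [hs, EuclideanSpace.inner_single_left, EuclideanSpace.norm_single] at h1
    simp only [map_one, one_mul, norm_one, hy, mul_one] at h1
    exact abs_le.1 h1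
  have latEq : ∀ y : EuclideanSpace ℝ (Fin N), ‖y‖ = 1 →
      u (M.symm y) = u (M.symm (circlePoint N (Real.pi - Real.arcsin (y ⟨N - 1, by omega⟩)))) := by
    intro y hy
    obtain ⟨hl, hr⟩ := hcoord y hy
    refine hlat (y ⟨N - 1, by omega⟩) ⟨hl, hr⟩ y ?_ _ ?_ rfl ?_
    · simpa [mem_sphere_zero_iff_norm] using hy
    · simpa [mem_sphere_zero_iff_norm] using circlePoint_norm N hN _
    · rw [circlePoint_apply_last N hN, Real.sin_pi_sub, Real.sin_arcsin hl hr]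
  have keyMono : ∀ y z : EuclideanSpace ℝ (Fin N), ‖y‖ = 1 → ‖z‖ = 1 →
      z ⟨N - 1, by omega⟩ ≤ y ⟨N - 1, by omega⟩ → u (M.symm z) ≤ u (M.symm y) := by
    intro y z hy hz hle
    rw [latEq y hy, latEq z hz]
    have hay := Real.arcsin_mem_Icc (y ⟨N - 1, by omega⟩)
    have haz := Real.arcsin_mem_Icc (z ⟨N - 1, by omega⟩)
    obtain ⟨hay1, hay2⟩ := hay
    obtain ⟨haz1, haz2⟩ := haz
    have harc : Real.arcsin (z ⟨N - 1, by omega⟩) ≤ Real.arcsin (y ⟨N - 1, by omega⟩) :=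
      Real.monotone_arcsin hle
    exact hmono ⟨by linarith, by linarith⟩ ⟨by linarith, by linarith⟩ (by linarith)
  have hb : M a ≠ 0 := fun h => ha (by simpa using congrArg M.symm h)
  have hna : ‖a‖ ≠ 0 := norm_ne_zero_iff.2 ha
  have hbb : ⟪M a, M a⟫ = ‖a‖ ^ 2 := by
    rw [LinearIsometryEquiv.inner_map_map]; exact real_inner_self_eq_norm_sq a
  have hbe : (M a) ⟨N - 1, by omega⟩ = ⟪a, M.symm s⟫ := by
    rw [real_inner_comm, ← LinearIsometryEquiv.inner_map_map M, M.apply_symm_apply, hs,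
      EuclideanSpace.inner_single_left]
    simp
  have hreflcoord : ∀ b z : EuclideanSpace ℝ (Fin N),
      (reflectHyp0 b z) ⟨N - 1, by omega⟩ =
        z ⟨N - 1, by omega⟩ - ((2 * ⟪b, z⟫) / ⟪b, b⟫) * b ⟨N - 1, by omega⟩ := by
    intro b z; rfl
  have hpos2 : (0:ℝ) < ‖a‖ ^ 2 := by positivity
  constructor
  · intro hap x hx hax
    have hx1 : ‖x‖ = 1 := mem_sphere_zero_iff_norm.1 hx
    have hy1 : ‖M x‖ = 1 := by rw [M.norm_map]; exact hx1
    have hr1 : ‖reflectHyp0 (M a) (M x)‖ = 1 := by rw [reflectHyp0_norm hb]; exact hy1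
    have hinner : ⟪M a, M x⟫ = ⟪a, x⟫ := M.inner_map_map a x
    have hsub : 0 ≤ ((2 * ⟪M a, M x⟫) / ⟪M a, M a⟫) * (M a) ⟨N - 1, by omega⟩ := by
      rw [hinner, hbb, hbe]
      have h1 : (0:ℝ) < 2 * ⟪a, x⟫ := by linarith
      exact le_of_lt (mul_pos (div_pos h1 hpos2) hap)
    have hle : (reflectHyp0 (M a) (M x)) ⟨N - 1, by omega⟩ ≤ (M x) ⟨N - 1, by omega⟩ := by
      rw [hreflcoord]; linarith
    calc u (reflectHyp0 a x) = u (M.symm (reflectHyp0 (M a) (M x))) := by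
          rw [← reflectHyp0_map M a x, M.symm_apply_apply]
      _ ≤ u (M.symm (M x)) := keyMono (M x) (reflectHyp0 (M a) (M x)) hy1 hr1 hle
      _ = u x := by rw [M.symm_apply_apply]
  · intro hap x hx hax
    have hx1 : ‖x‖ = 1 := mem_sphere_zero_iff_norm.1 hx
    have hy1 : ‖M x‖ = 1 := by rw [M.norm_map]; exact hx1
    have hr1 : ‖reflectHyp0 (M a) (M x)‖ = 1 := by rw [reflectHyp0_norm hb]; exact hy1
    have hinner : ⟪M a, M x⟫ = ⟪a, x⟫ := M.inner_map_map a x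
    have hsub' : ((2 * ⟪M a, M x⟫) / ⟪M a, M a⟫) * (M a) ⟨N - 1, by omega⟩ ≤ 0 := by
      rw [hinner, hbb, hbe]
      have h1 : (0:ℝ) < 2 * ⟪a, x⟫ := by linarith
      exact le_of_lt (mul_neg_of_pos_of_neg (div_pos h1 hpos2) hap)
    have hle : (M x) ⟨N - 1, by omega⟩ ≤ (reflectHyp0 (M a) (M x)) ⟨N - 1, by omega⟩ := by
      rw [hreflcoord]; linarith
    calc u x = u (M.symm (M x)) := by rw [M.symm_apply_apply]
      _ ≤ u (M.symm (reflectHyp0 (M a) (M x))) :=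
          keyMono (reflectHyp0 (M a) (M x)) (M x) hr1 hy1 hle
      _ = u (reflectHyp0 a x) := by rw [← reflectHyp0_map M a x, M.symm_apply_apply]
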